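/- Let Ω ⊆ ℝ^N be Lebesgue measurable with |Ω| < ∞ and r < -N. Then the upper φ-shell Minkowski content M̄_φ^r(∞,Ω) converges to the upper Minkowski content M̄^r(∞,Ω) as φ → +∞. -/

import Mathlib

open MeasureTheory Filter Set
open scoped ENNReal NNReal Topology

noncomputable section

/-- The `[a,b)`-shell centered at the origin in `ℝ^N`. -/
def shell (N : ℕ) (a b : ℝ) : Set (EuclideanSpace ℝ (Fin N)) :=
  {x | a ≤ ‖x‖ ∧ ‖x‖ < b}

/-- The complement of the open ball `B_t(0)` in `ℝ^N`. -/
def farBall (N : ℕ) (t : ℝ) : Set (EuclideanSpace ℝ (Fin N)) :=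
  {x | t ≤ ‖x‖}

/-- Upper φ-shell Minkowski content of `Ω` at infinity. -/
def upperShellContent (N : ℕ) (Ω : Set (EuclideanSpace ℝ (Fin N))) (φ r : ℝ) : ℝ≥0∞ :=
  Filter.limsup (fun t : ℝ =>
    volume (shell N t (φ * t) ∩ Ω) / ENNReal.ofReal (t ^ ((N : ℝ) + r))) Filter.atTop

/-- Lower φ-shell Minkowski content of `Ω` at infinity. -/
def lowerShellContent (N : ℕ) (Ω : Set (EuclideanSpace ℝ (Fin N))) (φ r : ℝ) : ℝ≥0∞ :=
  Filter.liminf (fun t : ℝ =>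
    volume (shell N t (φ * t) ∩ Ω) / ENNReal.ofReal (t ^ ((N : ℝ) + r))) Filter.atTop

/-- Upper Minkowski content of `Ω` at infinity. -/
def upperContent (N : ℕ) (Ω : Set (EuclideanSpace ℝ (Fin N))) (r : ℝ) : ℝ≥0∞ :=
  Filter.limsup (fun t : ℝ =>
    volume (farBall N t ∩ Ω) / ENNReal.ofReal (t ^ ((N : ℝ) + r))) Filter.atTop

/-- Lower Minkowski content of `Ω` at infinity. -/
def lowerContent (N : ℕ) (Ω : Set (EuclideanSpace ℝ (Fin N))) (r : ℝ) : ℝ≥0∞ :=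
  Filter.liminf (fun t : ℝ =>
    volume (farBall N t ∩ Ω) / ENNReal.ofReal (t ^ ((N : ℝ) + r))) Filter.atTop

/-- Upper φ-shell Minkowski dimension of `Ω` at infinity, as an extended real. -/
def upperShellDim (N : ℕ) (Ω : Set (EuclideanSpace ℝ (Fin N))) (φ : ℝ) : EReal :=
  sInf ((fun r : ℝ => (r : EReal)) '' {r : ℝ | upperShellContent N Ω φ r = 0})

/-- Lower φ-shell Minkowski dimension of `Ω` at infinity, as an extended real. -/
def lowerShellDim (N : ℕ) (Ω : Set (EuclideanSpace ℝ (Fin N))) (φ : ℝ) : EReal :=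
  sInf ((fun r : ℝ => (r : EReal)) '' {r : ℝ | lowerShellContent N Ω φ r = 0})

lemma shellContent_le_content (N : ℕ) (Ω : Set (EuclideanSpace ℝ (Fin N))) (φ r : ℝ) :
    upperShellContent N Ω φ r ≤ upperContent N Ω r := by
  refine limsup_le_limsup (Eventually.of_forall fun t => ?_)
  exact ENNReal.div_le_div_right
    (measure_mono (inter_subset_inter_left _ (fun x hx => hx.1))) _

lemma farBall_subset_iUnion_shell (N : ℕ) {φ t : ℝ} (hφ : 1 < φ) (ht : 0 < t) :
    farBall N t ⊆ ⋃ k : ℕ, shell N (φ ^ k * t) (φ ^ (k + 1) * t) := by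
  intro x hx
  have hx' : t ≤ ‖x‖ := hx
  have hex : ∃ n : ℕ, ‖x‖ < φ ^ n * t := by
    obtain ⟨n, hn⟩ := pow_unbounded_of_one_lt (‖x‖ / t) hφ
    exact ⟨n, by rwa [div_lt_iff₀ ht] at hn⟩
  have hms := Nat.find_spec hex
  have hm0 : Nat.find hex ≠ 0 := by
    intro h0
    rw [h0, pow_zero, one_mul] at hms
    exact absurd hms (not_lt.mpr hx')
  obtain ⟨k, hk⟩ := Nat.exists_eq_succ_of_ne_zero hm0
  refine mem_iUnion.mpr ⟨k, ?_, ?_⟩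
  · exact not_lt.mp (Nat.find_min hex (by omega))
  · rw [hk, Nat.succ_eq_add_one] at hms; exact hms

lemma key_pointwise (N : ℕ) (Ω : Set (EuclideanSpace ℝ (Fin N))) (r : ℝ)
    {φ t : ℝ} (hφ : 1 < φ) (ht : 0 < t) (hp : (N : ℝ) + r < 0) :
    volume (farBall N t ∩ Ω) / ENNReal.ofReal (t ^ ((N : ℝ) + r)) ≤
      (⨆ s ∈ Ici t, volume (shell N s (φ * s) ∩ Ω) / ENNReal.ofReal (s ^ ((N : ℝ) + r)))
        * (1 - ENNReal.ofReal (φ ^ ((N : ℝ) + r)))⁻¹ := by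
  set p : ℝ := (N : ℝ) + r with hpdef
  have hφ0 : (0 : ℝ) < φ := lt_trans one_pos hφ
  have hq0 : (0 : ℝ) < φ ^ p := Real.rpow_pos_of_pos hφ0 p
  have hq1 : φ ^ p < 1 := Real.rpow_lt_one_of_one_lt_of_neg hφ hp
  set S : ℝ≥0∞ := ⨆ s ∈ Ici t, volume (shell N s (φ * s) ∩ Ω) / ENNReal.ofReal (s ^ p) with hS
  -- step 1: cover
  have hcov : volume (farBall N t ∩ Ω) ≤
      ∑' k : ℕ, volume (shell N (φ ^ k * t) (φ ^ (k + 1) * t) ∩ Ω) := by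
    refine le_trans (measure_mono ?_) (measure_iUnion_le _)
    rw [← iUnion_inter]
    exact inter_subset_inter_left _ (farBall_subset_iUnion_shell N hφ ht)
  have hEt0 : ENNReal.ofReal (t ^ p) ≠ 0 := by
    simp [ENNReal.ofReal_pos, Real.rpow_pos_of_pos ht p]
  have hEtT : ENNReal.ofReal (t ^ p) ≠ ∞ := ENNReal.ofReal_ne_top
  -- per-term
  have hterm : ∀ k : ℕ, volume (shell N (φ ^ k * t) (φ ^ (k + 1) * t) ∩ Ω)
        / ENNReal.ofReal (t ^ p) ≤ S * ENNReal.ofReal ((φ ^ p) ^ k) := by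
    intro k
    set s : ℝ := φ ^ k * t with hsdef
    have hs0 : 0 < s := by positivity
    have hst : t ≤ s := by
      have h1 : (1:ℝ) ≤ φ ^ k := one_le_pow₀ hφ.le
      nlinarith
    have hshell : shell N (φ ^ k * t) (φ ^ (k + 1) * t) = shell N s (φ * s) := by
      rw [hsdef]; ring_nf
    have hEs : ENNReal.ofReal (s ^ p) = ENNReal.ofReal (t ^ p) * ENNReal.ofReal ((φ ^ p) ^ k) := by
      rw [← ENNReal.ofReal_mul (by positivity)]
      congr 1
      rw [hsdef, Real.mul_rpow (by positivity) ht.le]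
      rw [← Real.rpow_natCast φ k, ← Real.rpow_mul hφ0.le, mul_comm (k : ℝ) p,
        Real.rpow_mul hφ0.le, Real.rpow_natCast]
      ring
    have hc0 : ENNReal.ofReal ((φ ^ p) ^ k) ≠ 0 := by
      simp [ENNReal.ofReal_pos]; positivity
    have hcT : ENNReal.ofReal ((φ ^ p) ^ k) ≠ ∞ := ENNReal.ofReal_ne_top
    have hdiv : ∀ a : ℝ≥0∞, a / ENNReal.ofReal (t ^ p)
        = a / ENNReal.ofReal (s ^ p) * ENNReal.ofReal ((φ ^ p) ^ k) := by
      intro a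
      rw [hEs, div_eq_mul_inv, div_eq_mul_inv,
        ENNReal.mul_inv (Or.inl hEt0) (Or.inl hEtT), mul_assoc, mul_assoc,
        ENNReal.inv_mul_cancel hc0 hcT, mul_one]
    rw [hdiv, hshell]
    refine mul_le_mul_left ?_ _
    exact le_iSup₂_of_le s hst le_rfl
  calc volume (farBall N t ∩ Ω) / ENNReal.ofReal (t ^ p)
      ≤ (∑' k : ℕ, volume (shell N (φ ^ k * t) (φ ^ (k + 1) * t) ∩ Ω))
          / ENNReal.ofReal (t ^ p) := ENNReal.div_le_div_right hcov _
    _ = ∑' k : ℕ, volume (shell N (φ ^ k * t) (φ ^ (k + 1) * t) ∩ Ω)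
          / ENNReal.ofReal (t ^ p) := by
        simp only [div_eq_mul_inv]; exact ENNReal.tsum_mul_right.symm
    _ ≤ ∑' k : ℕ, S * ENNReal.ofReal ((φ ^ p) ^ k) := ENNReal.tsum_le_tsum hterm
    _ = S * ∑' k : ℕ, ENNReal.ofReal ((φ ^ p) ^ k) := ENNReal.tsum_mul_left
    _ = S * (1 - ENNReal.ofReal (φ ^ p))⁻¹ := by
        congr 1
        rw [← ENNReal.tsum_geometric (ENNReal.ofReal (φ ^ p))]
        congr 1; funext k; rw [ENNReal.ofReal_pow hq0.le]

lemma content_le_shellContent_mul (N : ℕ) (Ω : Set (EuclideanSpace ℝ (Fin N))) (r : ℝ)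
    {φ : ℝ} (hφ : 1 < φ) (hp : (N : ℝ) + r < 0) :
    upperContent N Ω r ≤
      upperShellContent N Ω φ r * (1 - ENNReal.ofReal (φ ^ ((N : ℝ) + r)))⁻¹ := by
  set p : ℝ := (N : ℝ) + r with hpdef
  have hq1 : ENNReal.ofReal (φ ^ p) < 1 :=
    ENNReal.ofReal_lt_one.mpr (Real.rpow_lt_one_of_one_lt_of_neg hφ hp)
  have h10 : 1 - ENNReal.ofReal (φ ^ p) ≠ 0 := by
    have : 0 < 1 - ENNReal.ofReal (φ ^ p) := tsub_pos_of_lt hq1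
    exact this.ne'
  have h1T : 1 - ENNReal.ofReal (φ ^ p) ≠ ∞ :=
    (lt_of_le_of_lt (tsub_le_self) ENNReal.one_lt_top).ne
  set C : ℝ≥0∞ := (1 - ENNReal.ofReal (φ ^ p))⁻¹ with hC
  have hC0 : C ≠ 0 := ENNReal.inv_ne_zero.mpr h1T
  have hCT : C ≠ ∞ := ENNReal.inv_ne_top.mpr h10
  have hM : upperShellContent N Ω φ r =
      ⨅ t : ℝ, ⨆ s ∈ Ici t, volume (shell N s (φ * s) ∩ Ω) / ENNReal.ofReal (s ^ p) := by
    rw [upperShellContent, atTop_basis.limsup_eq_iInf_iSup]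
    simp
    rfl
  rw [hM, ENNReal.iInf_mul_of_ne hC0 hCT]
  refine le_iInf fun t₀ => ?_
  refine limsup_le_of_le (by isBoundedDefault) ?_
  filter_upwards [eventually_ge_atTop (max t₀ 1)] with t htt
  have ht0 : 0 < t := lt_of_lt_of_le one_pos (le_trans (le_max_right _ _) htt)
  refine le_trans (key_pointwise N Ω r hφ ht0 hp) ?_
  refine mul_le_mul_left ?_ _
  refine iSup₂_le fun s hs => le_iSup₂_of_le s ?_ le_rfl
  exact le_trans (le_trans (le_max_left _ _) htt) hs

lemma content_mul_le_shellContent (N : ℕ) (Ω : Set (EuclideanSpace ℝ (Fin N))) (r : ℝ)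
    {φ : ℝ} (hφ : 1 < φ) (hp : (N : ℝ) + r < 0) :
    upperContent N Ω r * (1 - ENNReal.ofReal (φ ^ ((N : ℝ) + r))) ≤
      upperShellContent N Ω φ r := by
  set p : ℝ := (N : ℝ) + r with hpdef
  have hq1 : ENNReal.ofReal (φ ^ p) < 1 :=
    ENNReal.ofReal_lt_one.mpr (Real.rpow_lt_one_of_one_lt_of_neg hφ hp)
  have h10 : 1 - ENNReal.ofReal (φ ^ p) ≠ 0 := (tsub_pos_of_lt hq1).ne'
  have h1T : 1 - ENNReal.ofReal (φ ^ p) ≠ ∞ :=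
    (lt_of_le_of_lt (tsub_le_self) ENNReal.one_lt_top).ne
  have h := mul_le_mul_left (content_le_shellContent_mul N Ω r hφ hp)
    (1 - ENNReal.ofReal (φ ^ p))
  rwa [mul_assoc, ENNReal.inv_mul_cancel h10 h1T, mul_one] at h

theorem tendsto_upper_shell_content_atTop
    (N : ℕ) (Ω : Set (EuclideanSpace ℝ (Fin N))) (hΩ : MeasurableSet Ω)
    (hfin : volume Ω < ⊤) (r : ℝ) (hr : r < -(N : ℝ)) :
    Filter.Tendsto (fun φ : ℝ => upperShellContent N Ω φ r) Filter.atTop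
      (nhds (upperContent N Ω r)) := by
  have hp : (N : ℝ) + r < 0 := by linarith
  have hq : Tendsto (fun φ : ℝ => ENNReal.ofReal (φ ^ ((N : ℝ) + r))) atTop (nhds 0) := by
    rw [show (0 : ℝ≥0∞) = ENNReal.ofReal 0 by simp]
    refine (ENNReal.continuous_ofReal.tendsto 0).comp ?_
    have h := tendsto_rpow_neg_atTop (neg_pos.mpr hp)
    simpa using h
  have hone : Tendsto (fun φ : ℝ => 1 - ENNReal.ofReal (φ ^ ((N : ℝ) + r))) atTop
      (nhds 1) := by
    have h := ENNReal.Tendsto.sub (tendsto_const_nhds (x := (1 : ℝ≥0∞))) hq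
      (Or.inl ENNReal.one_ne_top)
    simpa using h
  have hg : Tendsto (fun φ : ℝ =>
      upperContent N Ω r * (1 - ENNReal.ofReal (φ ^ ((N : ℝ) + r)))) atTop
      (nhds (upperContent N Ω r)) := by
    have h := ENNReal.Tendsto.const_mul (a := upperContent N Ω r) hone (Or.inl one_ne_zero)
    simpa using h
  refine tendsto_of_tendsto_of_tendsto_of_le_of_le' hg tendsto_const_nhds ?_
    (Eventually.of_forall fun φ => shellContent_le_content N Ω φ r)
  filter_upwards [eventually_gt_atTop 1] with φ hφ
  exact content_mul_le_shellContent N Ω r hφ hp
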